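/- Let A be a (not necessarily unital) C*-algebra, α : A → A a *-homomorphism, H a complex Hilbert space, π : A → B(H) a nondegenerate *-representation (i.e. the closed linear span of {π(a)ξ : a ∈ A, ξ ∈ H} equals H), and U ∈ B(H) a bounded operator satisfying U π(a) U* = π(α(a)) for all a ∈ A. Then: (1) UU* is a projection (equivalently, U is a partial isometry, U = U U* U); (2) the initial projection U*U commutes with π(a) for every a ∈ A; (3) the set I_{(π,U)} := {a ∈ A : U*U π(a) = π(a)} is a closed two-sided ideal of A. -/

import Mathlib

open Unitization Filter Topology

section OrderPullback
variable {A : Type*} [NonUnitalCStarAlgebra A]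

noncomputable local instance poU : PartialOrder (Unitization ℂ A) := CStarAlgebra.spectralOrder _
local instance soU : StarOrderedRing (Unitization ℂ A) := CStarAlgebra.spectralOrderedRing _

/-- The spectral order on a non-unital C*-algebra, pulled back from the unitization. -/
noncomputable def poA : PartialOrder A :=
  PartialOrder.lift (inr : A → Unitization ℂ A) (inr_injective (R := ℂ))

noncomputable local instance : PartialOrder A := poA

theorem soA : StarOrderedRing A := by
  refine StarOrderedRing.of_le_iff fun a b => ?_
  constructor
  · intro hab
    have hp : (0 : Unitization ℂ A) ≤ ((b - a : A) : Unitization ℂ A) := by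
      rw [inr_sub]; exact sub_nonneg.mpr hab
    have hsa : IsSelfAdjoint (b - a) := by
      rw [← isSelfAdjoint_inr (R := ℂ)]
      exact .of_nonneg hp
    have hqs : QuasispectrumRestricts (b - a) ContinuousMap.realToNNReal := by
      rw [QuasispectrumRestricts.nnreal_iff]
      intro x hx
      rw [Unitization.quasispectrum_eq_spectrum_inr' ℝ ℂ] at hx
      exact (SpectrumRestricts.nnreal_iff.mp (by simpa using hp.2 : SpectrumRestricts _ _)) x hx
    set s := cfcₙ Real.sqrt (b - a) with hs
    have hssa : IsSelfAdjoint s := cfcₙ_predicate Real.sqrt (b - a)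
    have hmul : star s * s = b - a := by
      rw [hssa.star_eq, hs, ← cfcₙ_mul Real.sqrt Real.sqrt (b - a)]
      rw [cfcₙ_congr (fun x hx => ?_), cfcₙ_id ℝ (b - a)]
      have hx0 : (0:ℝ) ≤ x := by
        rw [QuasispectrumRestricts.nnreal_iff] at hqs
        exact hqs x hx
      simpa using Real.mul_self_sqrt hx0
    exact ⟨s, by rw [hmul]; abel⟩
  · rintro ⟨s, rfl⟩
    show (a : Unitization ℂ A) ≤ (a + star s * s : A)
    rw [inr_add, inr_mul, inr_star]
    exact le_add_of_nonneg_right (star_mul_self_nonneg _)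

end OrderPullback

set_option maxHeartbeats 1000000 in
/-- For a representation `(π, U)` of a C*-dynamical system `(A, α)` on a
Hilbert space `H` (with `π` nondegenerate and `U π(a) U* = π(α a)`):
(1) `U U*` is a projection (equivalently `U` is a partial isometry, `U = U U* U`);
(2) the initial projection `U* U` commutes with every `π a`;
(3) `I_{(π,U)} = {a | U* U π(a) = π(a)}` is a closed two-sided ideal of `A`. -/
theorem stmt0 {A : Type*} [NonUnitalNormedRing A] [StarRing A] [CStarRing A]
    [NormedSpace ℂ A] [IsScalarTower ℂ A A] [SMulCommClass ℂ A A] [StarModule ℂ A]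
    [CompleteSpace A]
    {H : Type*} [NormedAddCommGroup H] [InnerProductSpace ℂ H] [CompleteSpace H]
    (α : A →⋆ₙₐ[ℂ] A) (π : A →⋆ₙₐ[ℂ] (H →L[ℂ] H)) (U : H →L[ℂ] H)
    (hπ : Dense (↑(Submodule.span ℂ {v : H | ∃ (a : A) (w : H), π a w = v}) : Set H))
    (hcov : ∀ a : A, U * π a * star U = π (α a)) :
    -- (1) `U U*` is a projection, i.e. `U` is a partial isometry
    ((U * star U) * (U * star U) = U * star U ∧ star (U * star U) = U * star U ∧
      U * star U * U = U) ∧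
    -- (2) `U* U` commutes with the range of `π`
    (∀ a : A, star U * U * π a = π a * (star U * U)) ∧
    -- (3) `{a | U* U π a = π a}` is a closed two-sided ideal of `A`
    (IsClosed {a : A | star U * U * π a = π a} ∧
      (0 : A) ∈ {a : A | star U * U * π a = π a} ∧
      (∀ a ∈ {a : A | star U * U * π a = π a}, ∀ b ∈ {a : A | star U * U * π a = π a},
        a + b ∈ {a : A | star U * U * π a = π a}) ∧
      (∀ a ∈ {a : A | star U * U * π a = π a}, -a ∈ {a : A | star U * U * π a = π a}) ∧
      (∀ a ∈ {a : A | star U * U * π a = π a}, ∀ x : A,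
        x * a ∈ {a : A | star U * U * π a = π a} ∧
          a * x ∈ {a : A | star U * U * π a = π a})) := by
  letI : NonUnitalCStarAlgebra A := { }
  letI : PartialOrder A := poA
  haveI : StarOrderedRing A := soA
  -- continuity of π and of evaluation
  have hπcont : Continuous π :=
    AddMonoidHomClass.continuous_of_bound π 1
      (fun x => by simpa using NonUnitalStarAlgHom.norm_apply_le π x)
  have hev : ∀ ξ : H, Continuous fun T : H →L[ℂ] H => T ξ := fun ξ =>
    (ContinuousLinearMap.apply ℂ H ξ).continuous
  have hl := CStarAlgebra.increasingApproximateUnit (A := A)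
  haveI hnb : (CStarAlgebra.approximateUnit A).NeBot := hl.toIsApproximateUnit.neBot
  -- strong convergence of π along the approximate unit
  have key : ∀ η : H, Tendsto (fun e : A => π e η) (CStarAlgebra.approximateUnit A) (𝓝 η) := by
    have hspan : ∀ v ∈ Submodule.span ℂ {v : H | ∃ (a : A) (w : H), π a w = v},
        Tendsto (fun e : A => π e v) (CStarAlgebra.approximateUnit A) (𝓝 v) := by
      intro v hv
      induction hv using Submodule.span_induction with
      | mem v hv =>
        obtain ⟨b, w, rfl⟩ := hv
        have h2 : Continuous fun x : A => π x w := (hev w).comp hπcont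
        have h3 := (h2.tendsto b).comp (hl.tendsto_mul_right b)
        refine h3.congr fun e => ?_
        simp [Function.comp, map_mul, ContinuousLinearMap.mul_apply]
      | zero => simpa using (tendsto_const_nhds : Tendsto (fun _ : A => (0:H)) _ _)
      | add x y hx hy ihx ihy => simpa using ihx.add ihy
      | smul c x hx ih => simpa using ih.const_smul c
    intro η
    rw [Metric.tendsto_nhds]
    intro ε hε
    obtain ⟨v, hvmem, hvd⟩ := Metric.mem_closure_iff.mp (hπ η) (ε/3) (by positivity)
    have h1 := Metric.tendsto_nhds.mp (hspan v hvmem) (ε/3) (by positivity)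
    filter_upwards [h1, hl.eventually_norm] with e he1 he2
    have hb1 : dist (π e η) (π e v) ≤ dist η v := by
      rw [dist_eq_norm, dist_eq_norm, ← map_sub]
      calc ‖π e (η - v)‖ ≤ ‖π e‖ * ‖η - v‖ := (π e).le_opNorm _
        _ ≤ 1 * ‖η - v‖ := by
            refine mul_le_mul_of_nonneg_right ?_ (norm_nonneg _)
            exact (NonUnitalStarAlgHom.norm_apply_le π e).trans he2
        _ = ‖η - v‖ := one_mul _
    calc dist (π e η) η ≤ dist (π e η) (π e v) + dist (π e v) v + dist v η :=
          dist_triangle4 _ _ _ _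
      _ ≤ dist η v + dist (π e v) v + dist v η := by linarith
      _ < ε/3 + ε/3 + ε/3 := by
          have := dist_comm v η
          gcongr <;> first | exact hvd | exact he1 | (rw [dist_comm]; exact hvd)
      _ = ε := by ring
  -- (analytic step 1) U U* acts as identity on π(α(A))
  have hP1 : ∀ a : A, U * star U * π (α a) = π (α a) := by
    intro a
    ext ξ
    have hπα : Continuous fun x : A => π (α x) ξ := by
      have hαcont : Continuous α :=
        AddMonoidHomClass.continuous_of_bound α 1
          (fun x => by simpa using NonUnitalStarAlgHom.norm_apply_le α x)
      have : Continuous fun x : A => π (α x) := hπcont.comp hαcont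
      exact (hev ξ).comp this
    have t1 : Tendsto (fun e : A => π (α (e * a)) ξ) (CStarAlgebra.approximateUnit A)
        (𝓝 (π (α a) ξ)) := (hπα.tendsto a).comp (hl.tendsto_mul_right a)
    have t2 : Tendsto (fun e : A => π (α (e * a)) ξ) (CStarAlgebra.approximateUnit A)
        (𝓝 ((U * star U * π (α a)) ξ)) := by
      have hform : ∀ e : A, π (α (e * a)) ξ = U ((π e) ((star U) ((π (α a)) ξ))) := by
        intro e
        have h : π (α (e * a)) = U * π e * star U * π (α a) := by
          rw [map_mul, map_mul, ← hcov e]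
        rw [h]
        simp [ContinuousLinearMap.mul_apply]
      simp_rw [hform]
      have := (U.continuous.tendsto _).comp (key ((star U) ((π (α a)) ξ)))
      simpa [ContinuousLinearMap.mul_apply, Function.comp_def] using this
    exact tendsto_nhds_unique t2 t1
  -- (analytic step 2) U U* is idempotent
  have hP2 : (U * star U) * (U * star U) = U * star U := by
    ext ξ
    have t1 : Tendsto (fun e : A => π (α e) ξ) (CStarAlgebra.approximateUnit A)
        (𝓝 ((U * star U) ξ)) := by
      have hform : ∀ e : A, π (α e) ξ = U ((π e) ((star U) ξ)) := by
        intro e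
        rw [← hcov e]
        simp [ContinuousLinearMap.mul_apply]
      simp_rw [hform]
      have := (U.continuous.tendsto _).comp (key ((star U) ξ))
      simpa [ContinuousLinearMap.mul_apply, Function.comp_def] using this
    have t2 : Tendsto (fun e : A => π (α e) ξ) (CStarAlgebra.approximateUnit A)
        (𝓝 (((U * star U) * (U * star U)) ξ)) := by
      have t2' := ((U * star U).continuous.tendsto _).comp t1
      have h3 : Tendsto (fun e : A => π (α e) ξ) (CStarAlgebra.approximateUnit A)
          (𝓝 ((U * star U) ((U * star U) ξ))) := by
        refine t2'.congr fun e => ?_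
        show (U * star U) (π (α e) ξ) = π (α e) ξ
        conv_rhs => rw [← hP1 e]
        rfl
      exact h3
    exact tendsto_nhds_unique t2 t1
  -- partial isometry
  have hPsa : star (U * star U) = U * star U := by simp [star_mul, star_star]
  have hPUU : U * star U * U = U := by
    have key4 : (U - U * star U * U) * star (U - U * star U * U)
        = U * star U - (U * star U) * (U * star U) - (U * star U) * (U * star U)
          + ((U * star U) * (U * star U)) * (U * star U) := by
      simp only [star_sub, star_mul, star_star]
      noncomm_ring
    rw [hP2, hP2] at key4
    have key5 : (U - U * star U * U) * star (U - U * star U * U) = 0 := by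
      rw [key4]; abel
    have h0 : ‖U - U * star U * U‖ * ‖U - U * star U * U‖ = 0 := by
      rw [← CStarRing.norm_self_mul_star, key5, norm_zero]
    have hT0 : U - U * star U * U = 0 := by
      have h1 := mul_self_eq_zero.mp h0
      rwa [norm_eq_zero] at h1
    have := sub_eq_zero.mp hT0
    exact this.symm
  -- Q is idempotent
  have hQQ : (star U * U) * (star U * U) = star U * U := by
    rw [mul_assoc, ← mul_assoc U, hPUU]
  -- the key algebraic identity coming from multiplicativity of π ∘ α
  have hsharp : ∀ a b : A, (star U * U) * π a * (star U * U) * π b * (star U * U)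
      = (star U * U) * π (a * b) * (star U * U) := by
    intro a b
    have h1 : U * π a * star U * (U * π b * star U) = U * π (a * b) * star U := by
      rw [hcov a, hcov b, hcov (a * b), ← map_mul, ← map_mul]
    have h2 := congrArg (fun X => star U * X * U) h1
    simp only [mul_assoc] at h2 ⊢
    exact h2
  -- Q commutes with the range of π
  have hQs : star (star U * U) = star U * U := by simp [star_mul, star_star]
  have hzero : ∀ b : A, π b * (star U * U)
      = (star U * U) * (π b * (star U * U)) := by
    intro b
    have hstarR : star (π b * (star U * U)) = (star U * U) * π (star b) := by
      rw [star_mul, hQs, map_star]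
    have hA : star (π b * (star U * U)) * (π b * (star U * U))
        = (star U * U) * π (star b * b) * (star U * U) := by
      rw [hstarR, map_mul]
      simp only [mul_assoc]
    have hB : star (π b * (star U * U)) * ((star U * U) * (π b * (star U * U)))
        = (star U * U) * π (star b * b) * (star U * U) := by
      rw [← hsharp (star b) b, hstarR]
      simp only [mul_assoc]
    have hC : star (π b * (star U * U))
          * ((star U * U) * ((star U * U) * (π b * (star U * U))))
        = (star U * U) * π (star b * b) * (star U * U) := by
      rw [← mul_assoc (star U * U) (star U * U), hQQ]
      exact hB
    have hexp : star (π b * (star U * U) - (star U * U) * (π b * (star U * U)))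
          * (π b * (star U * U) - (star U * U) * (π b * (star U * U)))
        = star (π b * (star U * U)) * (π b * (star U * U))
            - star (π b * (star U * U)) * ((star U * U) * (π b * (star U * U)))
          - (star (π b * (star U * U)) * ((star U * U) * (π b * (star U * U)))
            - star (π b * (star U * U))
              * ((star U * U) * ((star U * U) * (π b * (star U * U))))) := by
      simp only [star_sub, star_mul, hQs]
      noncomm_ring
    have hYY : star (π b * (star U * U) - (star U * U) * (π b * (star U * U)))
          * (π b * (star U * U) - (star U * U) * (π b * (star U * U))) = 0 := by
      rw [hexp, hA, hB, hC, sub_self]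
    have h0 : ‖π b * (star U * U) - (star U * U) * (π b * (star U * U))‖
        * ‖π b * (star U * U) - (star U * U) * (π b * (star U * U))‖ = 0 := by
      rw [← CStarRing.norm_star_mul_self, hYY, norm_zero]
    have hY0 : π b * (star U * U) - (star U * U) * (π b * (star U * U)) = 0 := by
      have h1 := mul_self_eq_zero.mp h0
      rwa [norm_eq_zero] at h1
    exact sub_eq_zero.mp hY0
  have claim2 : ∀ a : A, star U * U * π a = π a * (star U * U) := by
    intro a
    have h1 := hzero a
    have h2 : (star U * U) * π a = (star U * U) * π a * (star U * U) := by
      have h := hzero (star a)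
      have e1 : star (π (star a) * (star U * U)) = (star U * U) * π a := by
        rw [star_mul, hQs, map_star, star_star]
      calc (star U * U) * π a = star (π (star a) * (star U * U)) := e1.symm
        _ = star ((star U * U) * (π (star a) * (star U * U))) := by rw [← h]
        _ = star (π (star a) * (star U * U)) * star (star U * U) := by rw [star_mul]
        _ = (star U * U) * π a * (star U * U) := by rw [e1, hQs]
    calc (star U * U) * π a = (star U * U) * π a * (star U * U) := h2
      _ = (star U * U) * (π a * (star U * U)) := by rw [mul_assoc]
      _ = π a * (star U * U) := h1.symm
  refine ⟨⟨hP2, hPsa, hPUU⟩, claim2, ?_, ?_, ?_, ?_, ?_⟩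
  · -- closed
    have hset : {a : A | star U * U * π a = π a}
        = (fun a : A => star U * U * π a - π a) ⁻¹' {0} := by
      ext a
      simp [sub_eq_zero]
    rw [hset]
    exact isClosed_singleton.preimage ((continuous_const.mul hπcont).sub hπcont)
  · -- zero
    simp [Set.mem_setOf_eq]
  · -- add
    intro a ha b hb
    simp only [Set.mem_setOf_eq] at ha hb ⊢
    rw [map_add, mul_add, ha, hb]
  · -- neg
    intro a ha
    simp only [Set.mem_setOf_eq] at ha ⊢
    rw [map_neg, mul_neg, ha]
  · -- mul
    intro a ha x
    simp only [Set.mem_setOf_eq] at ha ⊢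
    constructor
    · rw [map_mul, ← mul_assoc, claim2 x, mul_assoc, ha]
    · rw [map_mul, ← mul_assoc, ha]
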